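/- The ballot number B(n,k) = (2n−k)!·(k+1)/((n−k)!·(n+1)!) equals the number of weak compositions (γ₀,...,γ_k) of n−k into k+1 nonnegative parts weighted by ∏_{i=0}^k C(γ_i); equivalently, ∑_{γ₀+⋯+γ_k = n−k} ∏_{i=0}^{k} C(γ_i) = (2n−k)!·(k+1)/((n−k)!·(n+1)!) for 0 ≤ k ≤ n. -/

import Mathlib

open Nat Finset

private lemma sum_antidiagonalTuple_succ {M : Type*} [AddCommMonoid M] {k n : ℕ}
    (f : (Fin (k + 1) → ℕ) → M) :
    ∑ γ ∈ Finset.Nat.antidiagonalTuple (k + 1) n, f γ =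
      ∑ ab ∈ antidiagonal n, ∑ δ ∈ Finset.Nat.antidiagonalTuple k ab.2, f (Fin.cons ab.1 δ) := by
  rw [Finset.sum_sigma']
  refine (Finset.sum_nbij' (fun p => Fin.cons p.1.1 p.2)
    (fun γ : Fin (k + 1) → ℕ => ⟨(γ 0, ∑ i : Fin k, γ i.succ), Fin.tail γ⟩) ?_ ?_ ?_ ?_ ?_).symm
  · rintro ⟨⟨a, b⟩, δ⟩ hp
    simp only [Finset.mem_sigma, Finset.HasAntidiagonal.mem_antidiagonal,
      Finset.Nat.mem_antidiagonalTuple] at hp ⊢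
    rw [Fin.sum_cons, hp.2, hp.1]
  · intro γ hγ
    simp only [Finset.Nat.mem_antidiagonalTuple, Fin.sum_univ_succ] at hγ
    simp only [Finset.mem_sigma, Finset.HasAntidiagonal.mem_antidiagonal,
      Finset.Nat.mem_antidiagonalTuple]
    exact ⟨hγ, rfl⟩
  · rintro ⟨⟨a, b⟩, δ⟩ hp
    simp only [Finset.mem_sigma, Finset.HasAntidiagonal.mem_antidiagonal,
      Finset.Nat.mem_antidiagonalTuple] at hp
    simp [Fin.tail_cons, hp.2]
  · intro γ hγ
    simp [Fin.cons_self_tail]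
  · intro γ hγ
    rfl

/-- The Catalan generating function as a formal power series over `ℚ`. -/
private noncomputable def catalanPS : PowerSeries ℚ :=
  PowerSeries.mk fun n => (catalan n : ℚ)

private lemma coeff_catalanPS_pow (j m : ℕ) :
    PowerSeries.coeff m (catalanPS ^ j) =
      ∑ γ ∈ Finset.Nat.antidiagonalTuple j m, ∏ i, (catalan (γ i) : ℚ) := by
  induction j generalizing m with
  | zero =>
    cases m with
    | zero => simp
    | succ m => simp [PowerSeries.coeff_one]
  | succ j ih =>
    rw [pow_succ, mul_comm, PowerSeries.coeff_mul, sum_antidiagonalTuple_succ]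
    refine Finset.sum_congr rfl fun ab _ => ?_
    rw [ih, Finset.mul_sum]
    refine Finset.sum_congr rfl fun δ _ => ?_
    rw [Fin.prod_univ_succ]
    simp [catalanPS]

private lemma catalanPS_eq : catalanPS = 1 + PowerSeries.X * catalanPS ^ 2 := by
  ext m
  cases m with
  | zero => simp [catalanPS]
  | succ m =>
    rw [map_add, PowerSeries.coeff_succ_X_mul, PowerSeries.coeff_one]
    simp only [Nat.succ_ne_zero, if_false, zero_add]
    rw [coeff_catalanPS_pow, Finset.Nat.antidiagonalTuple_two, Finset.sum_map]
    simp only [catalanPS, PowerSeries.coeff_mk]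
    rw [catalan_succ']
    push_cast
    refine Finset.sum_congr rfl fun ab _ => ?_
    simp [Fin.prod_univ_two]

private lemma S_rec (j m : ℕ) :
    PowerSeries.coeff (m + 1) (catalanPS ^ (j + 1)) =
      PowerSeries.coeff (m + 1) (catalanPS ^ j) +
        PowerSeries.coeff m (catalanPS ^ (j + 2)) := by
  have e : catalanPS ^ (j + 1) = catalanPS ^ j + PowerSeries.X * catalanPS ^ (j + 2) := by
    calc catalanPS ^ (j + 1) = catalanPS ^ j * catalanPS := pow_succ _ _
    _ = catalanPS ^ j * (1 + PowerSeries.X * catalanPS ^ 2) := by rw [← catalanPS_eq]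
    _ = catalanPS ^ j + PowerSeries.X * catalanPS ^ (j + 2) := by ring
  rw [e, map_add, PowerSeries.coeff_succ_X_mul]

private lemma catalan_cast_eq (m : ℕ) :
    (catalan m : ℚ) = ((2 * m)! : ℚ) / (m ! * (m + 1)!) := by
  have h1 : (m + 1) * catalan m = (2 * m).choose m :=
    succ_mul_catalan_eq_centralBinom m
  have h2 : (2 * m).choose m * m ! * m ! = (2 * m)! := by
    have := Nat.choose_mul_factorial_mul_factorial
      (show m ≤ 2 * m by omega)
    simpa [two_mul, show 2 * m - m = m by omega] using this
  have h3 : ((m + 1) * catalan m * m ! * m ! : ℕ) = (2 * m)! := by rw [h1, h2]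
  have h4 : (((m + 1) * catalan m * m ! * m ! : ℕ) : ℚ) = ((2 * m)! : ℚ) := by
    exact_mod_cast congrArg (Nat.cast : ℕ → ℚ) h3
  push_cast at h4
  have hm : (m ! : ℚ) ≠ 0 := by exact_mod_cast m.factorial_ne_zero
  have hm1 : ((m + 1)! : ℚ) ≠ 0 := by exact_mod_cast (m + 1).factorial_ne_zero
  rw [eq_div_iff (mul_ne_zero hm hm1), Nat.factorial_succ]
  push_cast
  linarith [h4]

/-- The ballot number formula, statement for a given number of parts minus one. -/
private def ballotP (j : ℕ) : Prop :=
  ∀ m : ℕ, PowerSeries.coeff m (catalanPS ^ (j + 1)) =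
    ((2 * m + j)! : ℚ) * (j + 1) / (m ! * (m + j + 1)!)

private lemma ballotP_zero : ballotP 0 := by
  intro m
  rw [pow_one]
  simp [catalanPS, catalan_cast_eq m]

private lemma ballotP_one : ballotP 1 := by
  intro m
  have h := S_rec 0 m
  rw [pow_zero, PowerSeries.coeff_one, if_neg (Nat.succ_ne_zero m)] at h
  have h2 : PowerSeries.coeff m (catalanPS ^ (1 + 1)) =
      PowerSeries.coeff (m + 1) (catalanPS ^ (0 + 1)) := by
    rw [show (0:ℕ) + 1 = 1 from rfl, show (1:ℕ) + 1 = 2 from rfl]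
    linarith [h]
  rw [h2, ballotP_zero (m + 1)]
  rw [show 2 * (m + 1) + 0 = 2 * m + 2 by ring, show m + 1 + 0 + 1 = m + 2 by ring,
    show 2 * m + 1 + 1 = 2 * m + 2 by ring]
  have e1 : ((2 * m + 2)! : ℚ) = (2 * m + 2) * (2 * m + 1)! := by
    exact_mod_cast congrArg (Nat.cast : ℕ → ℚ) (Nat.factorial_succ (2 * m + 1))
  have e2 : ((m + 1)! : ℚ) = (m + 1) * m ! := by
    exact_mod_cast congrArg (Nat.cast : ℕ → ℚ) (Nat.factorial_succ m)
  rw [e1, e2]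
  have hm : (m ! : ℚ) ≠ 0 := by exact_mod_cast m.factorial_ne_zero
  have hm2 : ((m + 2)! : ℚ) ≠ 0 := by exact_mod_cast (m + 2).factorial_ne_zero
  have h21 : ((2 * m + 1)! : ℚ) ≠ 0 := by exact_mod_cast (2 * m + 1).factorial_ne_zero
  field_simp
  ring

private lemma ballotP_succ_succ (j : ℕ) (h1 : ballotP j) (h2 : ballotP (j + 1)) :
    ballotP (j + 2) := by
  intro m
  have step : PowerSeries.coeff m (catalanPS ^ (j + 2 + 1)) =
      PowerSeries.coeff (m + 1) (catalanPS ^ (j + 1 + 1)) -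
        PowerSeries.coeff (m + 1) (catalanPS ^ (j + 1)) := by
    have h' := S_rec (j + 1) m
    rw [show j + 1 + 2 = j + 2 + 1 from rfl] at h'
    linarith [h']
  rw [step, h2 (m + 1), h1 (m + 1)]
  rw [show 2 * (m + 1) + (j + 1) = 2 * m + j + 3 by ring,
    show m + 1 + (j + 1) + 1 = m + j + 3 by ring,
    show 2 * (m + 1) + j = 2 * m + j + 2 by ring,
    show m + 1 + j + 1 = m + j + 2 by ring,
    show 2 * m + (j + 2) = 2 * m + j + 2 by ring,
    show m + (j + 2) + 1 = m + j + 3 by ring]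
  have e1 : ((2 * m + j + 3)! : ℚ) = (2 * m + j + 3) * (2 * m + j + 2)! := by
    exact_mod_cast congrArg (Nat.cast : ℕ → ℚ) (Nat.factorial_succ (2 * m + j + 2))
  have e2 : ((m + 1)! : ℚ) = (m + 1) * m ! := by
    exact_mod_cast congrArg (Nat.cast : ℕ → ℚ) (Nat.factorial_succ m)
  have e3 : ((m + j + 3)! : ℚ) = (m + j + 3) * (m + j + 2)! := by
    exact_mod_cast congrArg (Nat.cast : ℕ → ℚ) (Nat.factorial_succ (m + j + 2))
  rw [e1, e2, e3]
  have hm : (m ! : ℚ) ≠ 0 := by exact_mod_cast m.factorial_ne_zero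
  have hm2 : ((m + j + 2)! : ℚ) ≠ 0 := by exact_mod_cast (m + j + 2).factorial_ne_zero
  have h21 : ((2 * m + j + 2)! : ℚ) ≠ 0 := by exact_mod_cast (2 * m + j + 2).factorial_ne_zero
  field_simp
  push_cast
  ring

private lemma ballotP_all : ∀ j, ballotP j := by
  have key : ∀ j, ballotP j ∧ ballotP (j + 1) := by
    intro j
    induction j with
    | zero => exact ⟨ballotP_zero, ballotP_one⟩
    | succ j ih => exact ⟨ih.2, ballotP_succ_succ j ih.1 ih.2⟩
  exact fun j => (key j).1

/-- The ballot number `B(n,k) = (2n−k)!·(k+1)/((n−k)!·(n+1)!)` equals the sum over all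
weak compositions `(γ₀,…,γ_k)` of `n−k` into `k+1` nonnegative parts of `∏ C(γᵢ)`,
where `C` is the Catalan number. -/
theorem ballot_number_eq_sum_catalan_products (n k : ℕ) (h : k ≤ n) :
    ∑ γ ∈ Finset.Nat.antidiagonalTuple (k + 1) (n - k), ∏ i, (catalan (γ i) : ℚ) =
      ((2 * n - k)! : ℚ) * (k + 1) / ((n - k)! * (n + 1)!) := by
  rw [← coeff_catalanPS_pow, ballotP_all k (n - k)]
  rw [show 2 * (n - k) + k = 2 * n - k by omega, show n - k + k + 1 = n + 1 by omega]
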